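/- Let ℍ = {z ∈ ℂ : Im z > 0} be the upper half-plane, let g(z) = z + 1, and let h(z) = i + e^{2πiz}. Then h is a holomorphic self-map of ℍ satisfying h ∘ g = h; consequently, for the sequence g₁ = h and gₙ = g for n > 1, the right compositions Gₙ = g₁ ∘ g₂ ∘ ⋯ ∘ gₙ satisfy Gₙ = h for every n, so (Gₙ) converges to the non-constant map h even though gₙ → g and g has Denjoy–Wolff point ∞. -/

import Mathlib

open Complex Set Filter Metric

/-- The open upper half-plane in ℂ. -/
def upperHalf : Set ℂ := {z : ℂ | 0 < z.im}

/-- Right compositions: `rightComp g n = g 0 ∘ g 1 ∘ ⋯ ∘ g (n-1)`, so that `g k`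
plays the role of the `(k+1)`-st map `g_{k+1}` of the sequence. -/
def rightComp (g : ℕ → ℂ → ℂ) : ℕ → ℂ → ℂ
  | 0 => id
  | n + 1 => rightComp g n ∘ g n

noncomputable def hmap : ℂ → ℂ := fun z => Complex.I + Complex.exp (2 * (Real.pi : ℂ) * Complex.I * z)

lemma hmap_maps : MapsTo hmap upperHalf upperHalf := by
  intro z hz
  have habs : ‖Complex.exp (2 * (Real.pi : ℂ) * Complex.I * z)‖ < 1 := by
    rw [Complex.norm_exp]
    have : (2 * (Real.pi : ℂ) * Complex.I * z).re = -(2 * Real.pi * z.im) := by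
      simp [Complex.mul_re, Complex.mul_im]
    rw [this]
    have hz' : 0 < z.im := hz
    have : 0 < 2 * Real.pi * z.im := by positivity
    calc Real.exp (-(2 * Real.pi * z.im)) < Real.exp 0 := Real.exp_lt_exp.mpr (by linarith)
    _ = 1 := Real.exp_zero
  have him : -(1:ℝ) < (Complex.exp (2 * (Real.pi : ℂ) * Complex.I * z)).im := by
    have := Complex.abs_im_le_norm (Complex.exp (2 * (Real.pi : ℂ) * Complex.I * z))
    have := neg_abs_le (Complex.exp (2 * (Real.pi : ℂ) * Complex.I * z)).im
    linarith
  show 0 < (hmap z).im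
  simp only [hmap, Complex.add_im, Complex.I_im]
  linarith

lemma hmap_periodic (z : ℂ) : hmap (z + 1) = hmap z := by
  simp only [hmap]
  congr 1
  rw [mul_add, mul_one, Complex.exp_add]
  have : Complex.exp (2 * (Real.pi : ℂ) * Complex.I) = 1 := by
    rw [show (2 : ℂ) * (Real.pi : ℂ) * Complex.I = 2 * Real.pi * Complex.I by ring,
      Complex.exp_two_pi_mul_I]
  rw [this, mul_one]

lemma iter_add_one (n : ℕ) (z : ℂ) : (fun w : ℂ => w + 1)^[n] z = z + n := by
  induction n with
  | zero => simp
  | succ n ih => rw [Function.iterate_succ_apply', ih]; push_cast; ring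

lemma mem_upperHalf_add_one {z : ℂ} (hz : z ∈ upperHalf) : z + 1 ∈ upperHalf := by
  simpa [upperHalf] using hz

lemma rightComp_eq (n : ℕ) :
    ∀ z ∈ upperHalf,
      rightComp (fun k => if k = 0 then hmap else (fun w : ℂ => w + 1)) (n + 1) z = hmap z := by
  induction n with
  | zero => intro z _; rfl
  | succ n ih =>
    intro z hz
    have : rightComp (fun k => if k = 0 then hmap else (fun w : ℂ => w + 1)) (n + 2) z
        = rightComp (fun k => if k = 0 then hmap else (fun w : ℂ => w + 1)) (n + 1) (z + 1) := by
      simp [rightComp]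
    rw [this, ih (z + 1) (mem_upperHalf_add_one hz), hmap_periodic]

/-- **No boundary stability for right compositions.** On the upper half-plane ℍ, with
g(z) = z + 1 (whose iterates tend to the Denjoy–Wolff point ∞) and h(z) = i + e^{2πiz},
the map h is a holomorphic self-map of ℍ with h ∘ g = h; hence for the sequence g₁ = h,
gₙ = g (n > 1) (encoded with shifted indices: `gseq 0 = h`, `gseq k = g` for k ≥ 1), the
right compositions satisfy Gₙ = h on ℍ for every n ≥ 1, so (Gₙ) converges locally
uniformly on ℍ to the non-constant map h, even though gₙ → g. -/
theorem right_composition_boundary_instability_example :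
    MapsTo (fun z => Complex.I + Complex.exp (2 * (Real.pi : ℂ) * Complex.I * z))
      upperHalf upperHalf ∧
    Differentiable ℂ (fun z => Complex.I + Complex.exp (2 * (Real.pi : ℂ) * Complex.I * z)) ∧
    (∀ z ∈ upperHalf, MapsTo (fun w : ℂ => w + 1) upperHalf upperHalf ∧
      Tendsto (fun n => ‖(fun w : ℂ => w + 1)^[n] z‖) atTop atTop) ∧
    (∀ z ∈ upperHalf,
      (fun z => Complex.I + Complex.exp (2 * (Real.pi : ℂ) * Complex.I * z)) ((fun w : ℂ => w + 1) z) =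
      (fun z => Complex.I + Complex.exp (2 * (Real.pi : ℂ) * Complex.I * z)) z) ∧
    (∀ n : ℕ, 1 ≤ n → ∀ z ∈ upperHalf,
      rightComp (fun k => if k = 0 then
          (fun z => Complex.I + Complex.exp (2 * (Real.pi : ℂ) * Complex.I * z))
        else (fun w : ℂ => w + 1)) n z =
      Complex.I + Complex.exp (2 * (Real.pi : ℂ) * Complex.I * z)) ∧
    TendstoLocallyUniformlyOn
      (rightComp (fun k => if k = 0 then
          (fun z => Complex.I + Complex.exp (2 * (Real.pi : ℂ) * Complex.I * z))
        else (fun w : ℂ => w + 1)))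
      (fun z => Complex.I + Complex.exp (2 * (Real.pi : ℂ) * Complex.I * z)) atTop upperHalf ∧
    (∃ z ∈ upperHalf, ∃ w ∈ upperHalf,
      Complex.I + Complex.exp (2 * (Real.pi : ℂ) * Complex.I * z) ≠
      Complex.I + Complex.exp (2 * (Real.pi : ℂ) * Complex.I * w)) := by
  refine ⟨hmap_maps, ?_, ?_, ?_, ?_⟩
  · exact Differentiable.const_add _ (Differentiable.cexp (𝕜 := ℂ) (f := fun z : ℂ => 2 * (Real.pi : ℂ) * Complex.I * z) (by fun_prop))
  · intro z hz
    refine ⟨fun w hw => mem_upperHalf_add_one hw, ?_⟩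
    have key : ∀ n : ℕ, (n : ℝ) - ‖z‖ ≤ ‖(fun w : ℂ => w + 1)^[n] z‖ := by
      intro n
      rw [iter_add_one]
      have : ‖(n : ℂ)‖ ≤ ‖z + n‖ + ‖z‖ := by
        calc ‖(n : ℂ)‖ = ‖(z + n) + (-z)‖ := by congr 1; ring
        _ ≤ ‖z + n‖ + ‖-z‖ := norm_add_le _ _
        _ = ‖z + n‖ + ‖z‖ := by rw [norm_neg]
      simpa using this
    refine tendsto_atTop_mono key ?_
    have := tendsto_atTop_add_const_right atTop (-‖z‖) tendsto_natCast_atTop_atTop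
    simpa [sub_eq_add_neg] using this
  · intro z _
    exact hmap_periodic z
  · have hG : ∀ n : ℕ, 1 ≤ n → ∀ z ∈ upperHalf,
        rightComp (fun k => if k = 0 then
            (fun z => Complex.I + Complex.exp (2 * (Real.pi : ℂ) * Complex.I * z))
          else (fun w : ℂ => w + 1)) n z =
        Complex.I + Complex.exp (2 * (Real.pi : ℂ) * Complex.I * z) := by
      intro n hn z hz
      obtain ⟨m, rfl⟩ := Nat.exists_eq_add_of_le hn
      rw [add_comm 1 m]
      exact rightComp_eq m z hz
    refine ⟨hG, ?_, ?_⟩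
    · intro u hu x hx
      refine ⟨upperHalf, self_mem_nhdsWithin, ?_⟩
      filter_upwards [eventually_ge_atTop 1] with n hn y hy
      rw [hG n hn y hy]
      exact refl_mem_uniformity hu
    · refine ⟨Complex.I, by simp [upperHalf], Complex.I / 2, ?_, ?_⟩
      · show (0:ℝ) < (Complex.I / 2).im
        simp [Complex.div_im]
      · intro h
        have h2 : Complex.exp (2 * (Real.pi : ℂ) * Complex.I * Complex.I) =
            Complex.exp (2 * (Real.pi : ℂ) * Complex.I * (Complex.I / 2)) := by
          exact add_left_cancel h
        have e1 : (2 : ℂ) * (Real.pi : ℂ) * Complex.I * Complex.I = ((-(2 * Real.pi) : ℝ) : ℂ) := by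
          push_cast; rw [mul_assoc, Complex.I_mul_I]; ring
        have e2 : (2 : ℂ) * (Real.pi : ℂ) * Complex.I * (Complex.I / 2) = ((-Real.pi : ℝ) : ℂ) := by
          push_cast
          rw [show (2 : ℂ) * (Real.pi : ℂ) * Complex.I * (Complex.I / 2)
            = (Real.pi : ℂ) * (Complex.I * Complex.I) by ring, Complex.I_mul_I]
          ring
        rw [e1, e2, ← Complex.ofReal_exp, ← Complex.ofReal_exp, Complex.ofReal_inj] at h2
        have := Real.exp_injective h2
        have hπ := Real.pi_pos
        linarith
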